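/- arXiv:1710.08056 — 6 statements merged into one kernel-verified Lean document; each statement's English description precedes it below -/
import Mathlib

section
/- The cubic hypersurface Y in P^{n+1} defined by f(y_0,...,y_n) + l(y_0,...,y_n)·y_{n+1}^2 = 0 is smooth, provided that X = V(f) ⊂ P^n is a smooth cubic hypersurface and the hyperplane H = V(l) ⊂ P^n intersects X transversely. -/
open MvPolynomial

lemma my_coeff_pderiv {σ : Type*} [DecidableEq σ] (i : σ) (p : MvPolynomial σ ℂ) (d : σ →₀ ℕ) :
    coeff d (pderiv i p) = ((d i : ℂ) + 1) * coeff (d + Finsupp.single i 1) p := by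
  induction p using MvPolynomial.induction_on' with
  | monomial s a =>
    rw [pderiv_monomial, coeff_monomial, coeff_monomial]
    by_cases h : s = d + Finsupp.single i 1
    · subst h
      have h1 : d + Finsupp.single i 1 - Finsupp.single i 1 = d := by simp
      have h2 : ((d + Finsupp.single i 1 : _ →₀ ℕ)) i = d i + 1 := by simp
      rw [if_pos h1, if_pos rfl, h2]
      push_cast; ring
    · rw [if_neg h, mul_zero]
      by_cases h0 : s i = 0
      · split <;> simp [h0]
      · have hle : Finsupp.single i 1 ≤ s := Finsupp.single_le_iff.mpr (by omega)
        have hne : s - Finsupp.single i 1 ≠ d := by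
          intro e
          exact h (by rw [← e, tsub_add_cancel_of_le hle])
        rw [if_neg hne]
  | add p q hp hq => simp [hp, hq, mul_add]

lemma my_coeff_eq_zero {σ : Type*} [DecidableEq σ] {j : σ} {p : MvPolynomial σ ℂ}
    (hp : pderiv j p = 0) {m : σ →₀ ℕ} (hm : m j ≠ 0) : coeff m p = 0 := by
  have hle : Finsupp.single j 1 ≤ m := Finsupp.single_le_iff.mpr (by omega)
  have h := my_coeff_pderiv j p (m - Finsupp.single j 1)
  rw [hp, coeff_zero, tsub_add_cancel_of_le hle] at h
  set m' : σ →₀ ℕ := m - Finsupp.single j 1 with hm'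
  have hne : ((m' j : ℂ) + 1) ≠ 0 := by
    exact_mod_cast Nat.succ_ne_zero (m' j)
  rcases mul_eq_zero.mp h.symm with h' | h'
  · exact absurd h' hne
  · exact h'

lemma my_pderiv_pderiv {σ : Type*} [DecidableEq σ] {j : σ} {p : MvPolynomial σ ℂ}
    (hp : pderiv j p = 0) (i : σ) : pderiv j (pderiv i p) = 0 := by
  ext d
  rw [coeff_zero, my_coeff_pderiv, my_coeff_pderiv,
    my_coeff_eq_zero hp (m := d + Finsupp.single j 1 + Finsupp.single i 1) (by simp),
    mul_zero, mul_zero]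

lemma my_eval_congr {σ : Type*} [DecidableEq σ] {j : σ} {p : MvPolynomial σ ℂ}
    (hp : pderiv j p = 0) {y z : σ → ℂ} (h : ∀ i, i ≠ j → y i = z i) :
    eval y p = eval z p := by
  rw [eval_eq, eval_eq]
  refine Finset.sum_congr rfl fun d hd => ?_
  congr 1
  refine Finset.prod_congr rfl fun i hi => ?_
  have hij : i ≠ j := by
    rintro rfl
    exact (MvPolynomial.mem_support_iff.mp hd)
      (my_coeff_eq_zero hp (Finsupp.mem_support_iff.mp hi))
  rw [h i hij]

lemma my_degree_single {σ : Type*} (i : σ) : (Finsupp.single i 1 : σ →₀ ℕ).degree = 1 := by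
  classical
  exact Finsupp.degree_single i 1

lemma my_degree_add_single {σ : Type*} (d : σ →₀ ℕ) (i : σ) :
    (d + Finsupp.single i 1).degree = d.degree + 1 := by
  classical
  simp only [Finsupp.degree_eq_weight_one] at *
  rw [map_add]
  have := my_degree_single i
  simp only [Finsupp.degree_eq_weight_one] at this
  rw [this]

lemma my_pderiv_eq_C {σ : Type*} [DecidableEq σ] {l : MvPolynomial σ ℂ}
    (hl1 : l.IsHomogeneous 1) (i : σ) :
    pderiv i l = C (coeff (Finsupp.single i 1) l) := by
  ext d
  rw [my_coeff_pderiv, coeff_C]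
  by_cases hd : d = 0
  · subst hd; simp
  · rw [if_neg (Ne.symm hd), hl1.coeff_eq_zero, mul_zero]
    have h0 : d.degree ≠ 0 := fun h => hd ((Finsupp.degree_eq_zero_iff d).mp h)
    rw [my_degree_add_single]
    omega

lemma my_homog_one_eq_zero {σ : Type*} [DecidableEq σ] {l : MvPolynomial σ ℂ}
    (hl1 : l.IsHomogeneous 1) (h : ∀ i, coeff (Finsupp.single i 1) l = 0) : l = 0 := by
  ext d
  rw [coeff_zero]
  by_cases hd : d = 0
  · subst hd
    exact hl1.coeff_eq_zero (by simp [map_zero])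
  · obtain ⟨j, hj⟩ : ∃ j, d j ≠ 0 := by
      by_contra hc; push_neg at hc; exact hd (Finsupp.ext hc)
    exact my_coeff_eq_zero (by rw [my_pderiv_eq_C hl1 j, h j, map_zero]) hj


/-- If `X = V(f) ⊂ P^n` is a smooth cubic hypersurface and the hyperplane
`H = V(l)` intersects `X` transversely, then the cubic hypersurface
`Y = V(f + l·y_{n+1}^2) ⊂ P^{n+1}` is smooth.  Here `f` and `l` are homogeneous of
degrees 3 and 1 in `y_0,…,y_n` (i.e. they do not involve the last variable `y_{n+1}`). -/
theorem cubic_Y_smooth (n : ℕ) (f l : MvPolynomial (Fin (n + 2)) ℂ)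
    (hf3 : f.IsHomogeneous 3) (hl1 : l.IsHomogeneous 1) (hl : l ≠ 0)
    (hfvar : pderiv (Fin.last (n + 1)) f = 0)
    (hlvar : pderiv (Fin.last (n + 1)) l = 0)
    -- `X = V(f) ⊂ P^n` is smooth
    (hXsm : ∀ y : Fin (n + 2) → ℂ, y ≠ 0 → y (Fin.last (n + 1)) = 0 →
      eval y f = 0 → (∀ i, eval y (pderiv i f) = 0) → False)
    -- `H = V(l)` intersects `X` transversely
    (htrans : ∀ y : Fin (n + 2) → ℂ, y ≠ 0 → y (Fin.last (n + 1)) = 0 →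
      eval y f = 0 → eval y l = 0 →
      LinearIndependent ℂ
        ![fun i => eval y (pderiv i f), fun i => eval y (pderiv i l)]) :
    ∀ y : Fin (n + 2) → ℂ, y ≠ 0 →
      ¬ (eval y (f + l * (X (Fin.last (n + 1))) ^ 2) = 0 ∧
        ∀ i, eval y (pderiv i (f + l * (X (Fin.last (n + 1))) ^ 2)) = 0) := by
  rintro y hy ⟨h0, hpd⟩
  set j : Fin (n + 2) := Fin.last (n + 1) with hj
  set t : ℂ := y j with ht
  -- value equation
  have hF : eval y f + eval y l * t ^ 2 = 0 := by
    simpa [map_add, map_mul, map_pow, eval_X] using h0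
  -- derivative in the last variable
  have hDj : eval y l * (2 * t) = 0 := by
    have := hpd j
    simp only [map_add, pderiv_mul, pderiv_pow, pderiv_X_self, hfvar, hlvar] at this
    simpa [map_add, map_mul, map_pow, eval_X] using this
  -- derivative in the other variables
  have hD : ∀ i, eval y (pderiv i f) + eval y (pderiv i l) * t ^ 2 = 0 := by
    intro i
    by_cases hij : i = j
    · subst hij; rw [hfvar, hlvar]; simp
    · have := hpd i
      have hX : pderiv i (X j : MvPolynomial (Fin (n + 2)) ℂ) = 0 :=
        pderiv_X_of_ne (Ne.symm hij)
      simp only [map_add, pderiv_mul, pderiv_pow, hX, mul_zero, add_zero] at this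
      simpa [map_add, map_mul, map_pow, eval_X] using this
  by_cases h : t = 0
  case pos =>
    apply hXsm y hy h
    · have := hF; rw [h] at this; simpa using this
    · intro i
      have := hD i; rw [h] at this; simpa using this
  case neg =>
    have hly : eval y l = 0 := by
      rcases mul_eq_zero.mp hDj with h' | h'
      · exact h'
      · exfalso
        apply h
        rcases mul_eq_zero.mp h' with h'' | h''
        · exact absurd h'' two_ne_zero
        · exact h''
    have hfy : eval y f = 0 := by
      have := hF; rw [hly] at this; simpa using this
    set y' : Fin (n + 2) → ℂ := Function.update y j 0 with hy'
    have hagree : ∀ i, i ≠ j → y i = y' i := fun i hi => (Function.update_of_ne hi 0 y).symm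
    have hfy' : eval y' f = 0 := by rw [← my_eval_congr hfvar hagree]; exact hfy
    have hly' : eval y' l = 0 := by rw [← my_eval_congr hlvar hagree]; exact hly
    have hdf : ∀ i, eval y' (pderiv i f) = eval y (pderiv i f) :=
      fun i => (my_eval_congr (my_pderiv_pderiv hfvar i) hagree).symm
    have hdl : ∀ i, eval y' (pderiv i l) = eval y (pderiv i l) :=
      fun i => (my_eval_congr (my_pderiv_pderiv hlvar i) hagree).symm
    by_cases hy0 : y' = 0
    · -- degenerate case : y = t • e_last ; deduce l = 0, contradiction
      apply hl
      apply my_homog_one_eq_zero hl1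
      intro i
      have hzero : ∀ i', i' ≠ j → y i' = (0 : Fin (n + 2) → ℂ) i' := by
        intro i' hi'
        rw [hagree i' hi', hy0]
      have hf0 : eval y (pderiv i f) = 0 := by
        rw [my_eval_congr (my_pderiv_pderiv hfvar i) hzero, eval_zero]
        rw [show constantCoeff (pderiv i f) = coeff 0 (pderiv i f) from rfl, my_coeff_pderiv]
        rw [hf3.coeff_eq_zero (by rw [zero_add, my_degree_single]; omega), mul_zero]
      have hl0 : eval y (pderiv i l) = coeff (Finsupp.single i 1) l := by
        rw [my_pderiv_eq_C hl1 i, eval_C]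
      have := hD i
      rw [hf0, hl0, zero_add] at this
      rcases mul_eq_zero.mp this with h' | h'
      · exact h'
      · exact absurd (pow_eq_zero_iff two_ne_zero |>.mp h') h
    · -- main case : use transversality at y'
      have hli := htrans y' hy0 (Function.update_self j 0 y) hfy' hly'
      rw [linearIndependent_fin2] at hli
      apply hli.2 (-t ^ 2)
      funext i
      simp only [Matrix.cons_val_one, Matrix.head_cons, Matrix.cons_val_zero, Pi.smul_apply,
        smul_eq_mul]
      rw [hdf, hdl]
      have := hD i
      linear_combination -this
end

section
/- The 7×7 symmetric integer matrix G with G_{00}=7, G_{ii}=3 for 1≤i≤6, G_{0i}=G_{i0}=3 for 1≤i≤6, and G_{ij}=1 for 1≤i≠j≤6 is positive definite and has determinant 64. -/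
set_option maxHeartbeats 1000000

/-- Lower-triangular factor in an LU decomposition of the Gram matrix. -/
noncomputable def gramLmat : Matrix (Fin 7) (Fin 7) ℝ :=
  !![1, 0, 0, 0, 0, 0, 0;
     3/7, 1, 0, 0, 0, 0, 0;
     3/7, -1/6, 1, 0, 0, 0, 0;
     3/7, -1/6, -1/5, 1, 0, 0, 0;
     3/7, -1/6, -1/5, -1/4, 1, 0, 0;
     3/7, -1/6, -1/5, -1/4, -1/3, 1, 0;
     3/7, -1/6, -1/5, -1/4, -1/3, -1/2, 1]

/-- Upper-triangular factor in an LU decomposition of the Gram matrix. -/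
noncomputable def gramUmat : Matrix (Fin 7) (Fin 7) ℝ :=
  !![7, 3, 3, 3, 3, 3, 3;
     0, 12/7, -2/7, -2/7, -2/7, -2/7, -2/7;
     0, 0, 5/3, -1/3, -1/3, -1/3, -1/3;
     0, 0, 0, 8/5, -2/5, -2/5, -2/5;
     0, 0, 0, 0, 3/2, -1/2, -1/2;
     0, 0, 0, 0, 0, 4/3, -2/3;
     0, 0, 0, 0, 0, 0, 1]

theorem gram_det_aux :
    (!![7, 3, 3, 3, 3, 3, 3;
         3, 3, 1, 1, 1, 1, 1;
         3, 1, 3, 1, 1, 1, 1;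
         3, 1, 1, 3, 1, 1, 1;
         3, 1, 1, 1, 3, 1, 1;
         3, 1, 1, 1, 1, 3, 1;
         3, 1, 1, 1, 1, 1, 3] : Matrix (Fin 7) (Fin 7) ℝ).det = 64 := by
  have hLU : (!![7, 3, 3, 3, 3, 3, 3;
         3, 3, 1, 1, 1, 1, 1;
         3, 1, 3, 1, 1, 1, 1;
         3, 1, 1, 3, 1, 1, 1;
         3, 1, 1, 1, 3, 1, 1;
         3, 1, 1, 1, 1, 3, 1;
         3, 1, 1, 1, 1, 1, 3] : Matrix (Fin 7) (Fin 7) ℝ) = gramLmat * gramUmat := by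
    ext i j
    rw [Matrix.mul_apply, Fin.sum_univ_succ, Fin.sum_univ_succ, Fin.sum_univ_succ,
      Fin.sum_univ_succ, Fin.sum_univ_succ, Fin.sum_univ_succ, Fin.sum_univ_one]
    fin_cases i <;> fin_cases j <;>
      simp [gramLmat, gramUmat] <;> norm_num
  have hL : gramLmat.det = 1 := by
    rw [Matrix.det_of_lowerTriangular]
    · norm_num [gramLmat, Fin.prod_univ_succ]
    · intro i j h
      fin_cases i <;> fin_cases j <;>
        first | exact absurd h (by decide) | norm_num [gramLmat]
  have hU : gramUmat.det = 64 := by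
    rw [Matrix.det_of_upperTriangular]
    · norm_num [gramUmat, Fin.prod_univ_succ]
    · intro i j h
      fin_cases i <;> fin_cases j <;>
        first | exact absurd h (by decide) | norm_num [gramUmat]
  rw [hLU, Matrix.det_mul, hL, hU, one_mul]

/-- The 7×7 Gram matrix `G` of the lattice `M` (with `G₀₀ = 7`, `Gᵢᵢ = 3`,
`G₀ᵢ = Gᵢ₀ = 3` and `Gᵢⱼ = 1` for `1 ≤ i ≠ j ≤ 6`) is positive definite and has
determinant 64. -/
theorem gram_posDef_det :
    let G : Matrix (Fin 7) (Fin 7) ℝ :=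
      !![7, 3, 3, 3, 3, 3, 3;
         3, 3, 1, 1, 1, 1, 1;
         3, 1, 3, 1, 1, 1, 1;
         3, 1, 1, 3, 1, 1, 1;
         3, 1, 1, 1, 3, 1, 1;
         3, 1, 1, 1, 1, 3, 1;
         3, 1, 1, 1, 1, 1, 3]
    G.PosDef ∧ G.det = 64 := by
  show (!![7, 3, 3, 3, 3, 3, 3;
         3, 3, 1, 1, 1, 1, 1;
         3, 1, 3, 1, 1, 1, 1;
         3, 1, 1, 3, 1, 1, 1;
         3, 1, 1, 1, 3, 1, 1;
         3, 1, 1, 1, 1, 3, 1;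
         3, 1, 1, 1, 1, 1, 3] : Matrix (Fin 7) (Fin 7) ℝ).PosDef ∧
    (!![7, 3, 3, 3, 3, 3, 3;
         3, 3, 1, 1, 1, 1, 1;
         3, 1, 3, 1, 1, 1, 1;
         3, 1, 1, 3, 1, 1, 1;
         3, 1, 1, 1, 3, 1, 1;
         3, 1, 1, 1, 1, 3, 1;
         3, 1, 1, 1, 1, 1, 3] : Matrix (Fin 7) (Fin 7) ℝ).det = 64
  refine ⟨Matrix.PosDef.of_dotProduct_mulVec_pos ?_ ?_, gram_det_aux⟩
  · rw [Matrix.IsHermitian, Matrix.conjTranspose_eq_transpose_of_trivial,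
      ← Matrix.transposeᵣ_eq]
    rfl
  · intro x hx
    have hcoord : x 0 ≠ 0 ∨ x 1 ≠ 0 ∨ x 2 ≠ 0 ∨ x 3 ≠ 0 ∨ x 4 ≠ 0 ∨ x 5 ≠ 0 ∨ x 6 ≠ 0 := by
      by_contra hc
      push_neg at hc
      obtain ⟨h0, h1, h2, h3, h4, h5, h6⟩ := hc
      exact hx (funext fun i => by
        fin_cases i <;> simp only [Pi.zero_apply] <;> assumption)
    have hq : dotProduct (star x) (Matrix.mulVec (!![7, 3, 3, 3, 3, 3, 3;
         3, 3, 1, 1, 1, 1, 1;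
         3, 1, 3, 1, 1, 1, 1;
         3, 1, 1, 3, 1, 1, 1;
         3, 1, 1, 1, 3, 1, 1;
         3, 1, 1, 1, 1, 3, 1;
         3, 1, 1, 1, 1, 1, 3] : Matrix (Fin 7) (Fin 7) ℝ) x) =
        7*x 0^2 + 3*(x 1^2 + x 2^2 + x 3^2 + x 4^2 + x 5^2 + x 6^2)
        + 6*x 0*(x 1 + x 2 + x 3 + x 4 + x 5 + x 6)
        + 2*(x 1*x 2 + x 1*x 3 + x 1*x 4 + x 1*x 5 + x 1*x 6
           + x 2*x 3 + x 2*x 4 + x 2*x 5 + x 2*x 6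
           + x 3*x 4 + x 3*x 5 + x 3*x 6 + x 4*x 5 + x 4*x 6 + x 5*x 6) := by
      have e3 : ((2 : Fin 6).succ : Fin 7) = 3 := rfl
      have e4 : ((2 : Fin 5).succ.succ : Fin 7) = 4 := rfl
      have e5 : ((2 : Fin 4).succ.succ.succ : Fin 7) = 5 := rfl
      have e6 : ((2 : Fin 3).succ.succ.succ.succ : Fin 7) = 6 := rfl
      simp [dotProduct, Matrix.mulVec, Fin.sum_univ_succ, Matrix.vecHead,
        Matrix.vecTail, e3, e4, e5, e6]
      ring
    rw [hq]
    rcases hcoord with h|h|h|h|h|h|h <;>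
      linarith [mul_self_pos.mpr h,
        sq_nonneg (7*x 0 + 3*(x 1 + x 2 + x 3 + x 4 + x 5 + x 6)),
        sq_nonneg (9*x 0 + 4*(x 1 + x 2 + x 3 + x 4 + x 5 + x 6)),
        sq_nonneg (x 1), sq_nonneg (x 2), sq_nonneg (x 3), sq_nonneg (x 4),
        sq_nonneg (x 5), sq_nonneg (x 6),
        sq_nonneg (x 1 - x 2), sq_nonneg (x 1 - x 3), sq_nonneg (x 1 - x 4),
        sq_nonneg (x 1 - x 5), sq_nonneg (x 1 - x 6),
        sq_nonneg (x 2 - x 3), sq_nonneg (x 2 - x 4), sq_nonneg (x 2 - x 5),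
        sq_nonneg (x 2 - x 6),
        sq_nonneg (x 3 - x 4), sq_nonneg (x 3 - x 5), sq_nonneg (x 3 - x 6),
        sq_nonneg (x 4 - x 5), sq_nonneg (x 4 - x 6), sq_nonneg (x 5 - x 6)]
end

section
/- The discriminant group of the lattice M with Gram matrix G (G_{00}=7, G_{ii}=3 for 1≤i≤6, G_{0i}=3, G_{ij}=1 for 1≤i≠j≤6) is isomorphic to (Z/2Z)^6. -/
namespace Disc5

def G : Matrix (Fin 7) (Fin 7) ℤ :=
  !![7, 3, 3, 3, 3, 3, 3;
     3, 3, 1, 1, 1, 1, 1;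
     3, 1, 3, 1, 1, 1, 1;
     3, 1, 1, 3, 1, 1, 1;
     3, 1, 1, 1, 3, 1, 1;
     3, 1, 1, 1, 1, 3, 1;
     3, 1, 1, 1, 1, 1, 3]

def U : Matrix (Fin 7) (Fin 7) ℤ :=
  !![0, 1, 0, 0, 0, 0, 0;
     1, -3, 0, 0, 0, 0, 0;
     -3, 6, 1, 0, 0, 0, 0;
     -3, 5, 1, 1, 0, 0, 0;
     -3, 4, 1, 1, 1, 0, 0;
     -3, 3, 1, 1, 1, 1, 0;
     -3, 2, 1, 1, 1, 1, 1]

def Ui : Matrix (Fin 7) (Fin 7) ℤ :=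
  !![3, 1, 0, 0, 0, 0, 0;
     1, 0, 0, 0, 0, 0, 0;
     3, 3, 1, 0, 0, 0, 0;
     1, 0, -1, 1, 0, 0, 0;
     1, 0, 0, -1, 1, 0, 0;
     1, 0, 0, 0, -1, 1, 0;
     1, 0, 0, 0, 0, -1, 1]

/-- half of the rows 1..6 of `U * G` -/
def Kh : Matrix (Fin 6) (Fin 7) ℤ :=
  !![-1, -3, 0, 0, 0, 0, 0;
     0, 5, 0, -1, -1, -1, -1;
     0, 4, 0, 0, -1, -1, -1;
     0, 3, 0, 0, 0, -1, -1;
     0, 2, 0, 0, 0, 0, -1;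
     0, 1, 0, 0, 0, 0, 0]

lemma hUUi : U * Ui = 1 := by decide

lemma hK : ∀ i : Fin 6, (fun j => (U * G) i.succ j) = (2 : ℤ) • (fun j => Kh i j) := by decide

section vec7
variable {α : Type*} (a₀ a₁ a₂ a₃ a₄ a₅ a₆ : α)
lemma v7_0 : ![a₀,a₁,a₂,a₃,a₄,a₅,a₆] 0 = a₀ := rfl
lemma v7_1 : ![a₀,a₁,a₂,a₃,a₄,a₅,a₆] 1 = a₁ := rfl
lemma v7_2 : ![a₀,a₁,a₂,a₃,a₄,a₅,a₆] 2 = a₂ := rfl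
lemma v7_3 : ![a₀,a₁,a₂,a₃,a₄,a₅,a₆] 3 = a₃ := rfl
lemma v7_4 : ![a₀,a₁,a₂,a₃,a₄,a₅,a₆] 4 = a₄ := rfl
lemma v7_5 : ![a₀,a₁,a₂,a₃,a₄,a₅,a₆] 5 = a₅ := rfl
lemma v7_6 : ![a₀,a₁,a₂,a₃,a₄,a₅,a₆] 6 = a₆ := rfl
lemma v7m_0 : ![a₀,a₁,a₂,a₃,a₄,a₅,a₆] ⟨0, by omega⟩ = a₀ := rfl
lemma v7m_1 : ![a₀,a₁,a₂,a₃,a₄,a₅,a₆] ⟨1, by omega⟩ = a₁ := rfl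
lemma v7m_2 : ![a₀,a₁,a₂,a₃,a₄,a₅,a₆] ⟨2, by omega⟩ = a₂ := rfl
lemma v7m_3 : ![a₀,a₁,a₂,a₃,a₄,a₅,a₆] ⟨3, by omega⟩ = a₃ := rfl
lemma v7m_4 : ![a₀,a₁,a₂,a₃,a₄,a₅,a₆] ⟨4, by omega⟩ = a₄ := rfl
lemma v7m_5 : ![a₀,a₁,a₂,a₃,a₄,a₅,a₆] ⟨5, by omega⟩ = a₅ := rfl
lemma v7m_6 : ![a₀,a₁,a₂,a₃,a₄,a₅,a₆] ⟨6, by omega⟩ = a₆ := rfl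
lemma f7_0 : (⟨0, by omega⟩ : Fin 7) = 0 := rfl
lemma f7_1 : (⟨1, by omega⟩ : Fin 7) = 1 := rfl
lemma f7_2 : (⟨2, by omega⟩ : Fin 7) = 2 := rfl
lemma f7_3 : (⟨3, by omega⟩ : Fin 7) = 3 := rfl
lemma f7_4 : (⟨4, by omega⟩ : Fin 7) = 4 := rfl
lemma f7_5 : (⟨5, by omega⟩ : Fin 7) = 5 := rfl
lemma f7_6 : (⟨6, by omega⟩ : Fin 7) = 6 := rfl
end vec7

/-- the mod-2 reduction of rows 1..6 of `U ⬝ x` -/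
def φ : (Fin 7 → ℤ) →ₗ[ℤ] (Fin 6 → ZMod 2) where
  toFun x := fun i => ((U.mulVec x) i.succ : ZMod 2)
  map_add' x y := by
    funext i
    simp [Matrix.mulVec_add]
  map_smul' c x := by
    funext i
    show ((U.mulVec (c • x)) i.succ : ZMod 2) = c • ((U.mulVec x) i.succ : ZMod 2)
    rw [Matrix.mulVec_smul, Pi.smul_apply, smul_eq_mul, zsmul_eq_mul]
    push_cast
    ring

lemma φ_surj : Function.Surjective φ := by
  intro c
  refine ⟨Ui.mulVec (Matrix.vecCons 0 (fun i => ((c i).val : ℤ))), ?_⟩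
  funext i
  show ((U.mulVec (Ui.mulVec _)) i.succ : ZMod 2) = c i
  rw [Matrix.mulVec_mulVec, hUUi, Matrix.one_mulVec, Matrix.cons_val_succ]
  simp [ZMod.natCast_val, ZMod.cast_id]

lemma ker_eq : LinearMap.ker φ = LinearMap.range G.mulVecLin := by
  ext x
  simp only [LinearMap.mem_ker, LinearMap.mem_range, Matrix.mulVecLin_apply]
  constructor
  · intro h
    have h' : ∀ i : Fin 6, ∃ k : ℤ, (U.mulVec x) i.succ = 2 * k := by
      intro i
      have hi := congrFun h i
      simp only [φ, LinearMap.coe_mk, AddHom.coe_mk, Pi.zero_apply] at hi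
      exact (ZMod.intCast_zmod_eq_zero_iff_dvd _ 2).mp hi
    choose k hk using h'
    have h0 : U.mulVec x 1 = 2 * k 0 := hk 0
    have h1 : U.mulVec x 2 = 2 * k 1 := hk 1
    have h2 : U.mulVec x 3 = 2 * k 2 := hk 2
    have h3 : U.mulVec x 4 = 2 * k 3 := hk 3
    have h4 : U.mulVec x 5 = 2 * k 4 := hk 4
    have h5 : U.mulVec x 6 = 2 * k 5 := hk 5
    simp only [U, Matrix.mulVec, dotProduct, Fin.sum_univ_seven, Matrix.of_apply,
      v7_0, v7_1, v7_2, v7_3, v7_4, v7_5, v7_6] at h0 h1 h2 h3 h4 h5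
    refine ⟨![-(k 0) - 3 * k 5, k 5, x 1 + 3 * k 0 + k 1 + k 5, -(k 1) + k 2 + k 5,
      -(k 2) + k 3 + k 5, -(k 3) + k 4 + k 5, -(k 4) + 2 * k 5], ?_⟩
    funext j
    fin_cases j <;>
      simp only [G, Matrix.mulVec, dotProduct, Fin.sum_univ_seven, Matrix.of_apply,
        v7_0, v7_1, v7_2, v7_3, v7_4, v7_5, v7_6,
        v7m_0, v7m_1, v7m_2, v7m_3, v7m_4, v7m_5, v7m_6, f7_0, f7_1, f7_2, f7_3, f7_4, f7_5, f7_6] <;>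
      linarith [h0, h1, h2, h3, h4, h5]
  · rintro ⟨y, rfl⟩
    funext i
    show ((U.mulVec (G.mulVec y)) i.succ : ZMod 2) = 0
    rw [Matrix.mulVec_mulVec, ZMod.intCast_zmod_eq_zero_iff_dvd]
    have : (U * G).mulVec y i.succ = dotProduct (fun j => (U * G) i.succ j) y := rfl
    rw [this, hK i, smul_dotProduct, smul_eq_mul]
    exact ⟨_, rfl⟩

end Disc5

/-- The discriminant group of the lattice `M` with the stated Gram matrix
`G`, i.e. the cokernel of the linear map `ℤ⁷ → ℤ⁷` given by `G`, is isomorphic to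
`(ℤ/2ℤ)⁶`. -/
theorem discriminant_group :
    let G : Matrix (Fin 7) (Fin 7) ℤ :=
      !![7, 3, 3, 3, 3, 3, 3;
         3, 3, 1, 1, 1, 1, 1;
         3, 1, 3, 1, 1, 1, 1;
         3, 1, 1, 3, 1, 1, 1;
         3, 1, 1, 1, 3, 1, 1;
         3, 1, 1, 1, 1, 3, 1;
         3, 1, 1, 1, 1, 1, 3]
    Nonempty (((Fin 7 → ℤ) ⧸ LinearMap.range G.mulVecLin) ≃+ (Fin 6 → ZMod 2)) := by
  intro G
  exact ⟨((Submodule.quotEquivOfEq _ _ Disc5.ker_eq.symm).trans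
    (Disc5.φ.quotKerEquivOfSurjective Disc5.φ_surj)).toAddEquiv⟩
end

section
/- The sublattice of vectors in M orthogonal to h² = 3F_0 − F_1 − ... − F_6 has rank 6 and, with respect to the basis β_1 = −F_0 + F_1 + F_2 + F_3, β_j = F_j − F_{j−1} for 2≤j≤6, has Gram matrix equal to twice the Gram matrix of the root lattice E_6, i.e., (h²)^⊥ in M is isometric to E_6(2). -/
set_option maxHeartbeats 1000000

open Matrix

lemma cons_val_five' {α} {m} (x : α) (u : Fin (m+5) → α) :
    vecCons x u 5 = vecHead (vecTail (vecTail (vecTail (vecTail u)))) := rfl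

lemma cons_val_six' {α} {m} (x : α) (u : Fin (m+6) → α) :
    vecCons x u 6 = vecHead (vecTail (vecTail (vecTail (vecTail (vecTail u))))) := rfl

lemma aux_li : LinearIndependent ℤ
    (![![-1, 1, 1, 1, 0, 0, 0],
        ![0, -1, 1, 0, 0, 0, 0],
        ![0, 0, -1, 1, 0, 0, 0],
        ![0, 0, 0, -1, 1, 0, 0],
        ![0, 0, 0, 0, -1, 1, 0],
        ![0, 0, 0, 0, 0, -1, 1]] : Fin 6 → (Fin 7 → ℤ)) := by
  rw [Fintype.linearIndependent_iff]
  intro g hg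
  simp only [Fin.sum_univ_six, Matrix.cons_val_zero, Matrix.cons_val_one, Matrix.head_cons,
    Matrix.cons_val_two, Matrix.cons_val_three, Matrix.cons_val_four, cons_val_five',
    cons_val_six', Matrix.tail_cons, Matrix.smul_cons,
    smul_eq_mul, Matrix.smul_empty, Matrix.cons_add_cons, Matrix.empty_add_empty,
    Matrix.cons_eq_zero_iff] at hg
  obtain ⟨e0, e1, e2, e3, e4, e5, e6, -⟩ := hg
  intro i
  fin_cases i <;> simp <;> omega

lemma aux_span :
    (Submodule.span ℤ (Set.range
      (![![-1, 1, 1, 1, 0, 0, 0],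
        ![0, -1, 1, 0, 0, 0, 0],
        ![0, 0, -1, 1, 0, 0, 0],
        ![0, 0, 0, -1, 1, 0, 0],
        ![0, 0, 0, 0, -1, 1, 0],
        ![0, 0, 0, 0, 0, -1, 1]] : Fin 6 → (Fin 7 → ℤ))) : Set (Fin 7 → ℤ))
      = {x | x ⬝ᵥ (!![7, 3, 3, 3, 3, 3, 3;
         3, 3, 1, 1, 1, 1, 1;
         3, 1, 3, 1, 1, 1, 1;
         3, 1, 1, 3, 1, 1, 1;
         3, 1, 1, 1, 3, 1, 1;
         3, 1, 1, 1, 1, 3, 1;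
         3, 1, 1, 1, 1, 1, 3] : Matrix (Fin 7) (Fin 7) ℤ).mulVec
           ![3, -1, -1, -1, -1, -1, -1] = 0} := by
  set β : Fin 6 → (Fin 7 → ℤ) :=
      ![![-1, 1, 1, 1, 0, 0, 0],
        ![0, -1, 1, 0, 0, 0, 0],
        ![0, 0, -1, 1, 0, 0, 0],
        ![0, 0, 0, -1, 1, 0, 0],
        ![0, 0, 0, 0, -1, 1, 0],
        ![0, 0, 0, 0, 0, -1, 1]] with hβ
  set G : Matrix (Fin 7) (Fin 7) ℤ :=
      !![7, 3, 3, 3, 3, 3, 3;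
         3, 3, 1, 1, 1, 1, 1;
         3, 1, 3, 1, 1, 1, 1;
         3, 1, 1, 3, 1, 1, 1;
         3, 1, 1, 1, 3, 1, 1;
         3, 1, 1, 1, 1, 3, 1;
         3, 1, 1, 1, 1, 1, 3] with hG
  have key : ∀ x : Fin 7 → ℤ, x ⬝ᵥ G.mulVec ![3, -1, -1, -1, -1, -1, -1]
      = 3 * x 0 + x 1 + x 2 + x 3 + x 4 + x 5 + x 6 := by
    intro x
    rw [hG]
    simp [Matrix.mulVec, dotProduct, Fin.sum_univ_seven, Matrix.cons_val_zero,
      Matrix.cons_val_one, Matrix.head_cons, Matrix.cons_val_two, Matrix.cons_val_three,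
      Matrix.cons_val_four, cons_val_five', cons_val_six', Matrix.tail_cons, Matrix.vecHead,
      Matrix.vecTail]
    ring
  ext x
  simp only [SetLike.mem_coe, Set.mem_setOf_eq, key]
  constructor
  · intro hx
    induction hx using Submodule.span_induction with
    | mem y hy =>
      obtain ⟨k, rfl⟩ := hy
      rw [hβ]
      fin_cases k <;> decide
    | zero => simp
    | add a b _ _ ha hb => simp only [Pi.add_apply]; omega
    | smul c a _ ha => simp only [Pi.smul_apply, smul_eq_mul]; linear_combination c * ha
  · intro hx
    have hxe : x = (-x 0) • β 0 + (2*x 0 + x 2 + x 3 + x 4 + x 5 + x 6) • β 1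
        + (x 0 + x 3 + x 4 + x 5 + x 6) • β 2 + (x 4 + x 5 + x 6) • β 3
        + (x 5 + x 6) • β 4 + (x 6) • β 5 := by
      rw [hβ]
      funext i
      fin_cases i <;>
        simp [cons_val_five', cons_val_six', Matrix.tail_cons, Matrix.head_cons] <;> omega
    rw [hxe]
    have hm : ∀ k : Fin 6, β k ∈ Submodule.span ℤ (Set.range β) :=
      fun k => Submodule.subset_span ⟨k, rfl⟩
    exact Submodule.add_mem _ (Submodule.add_mem _ (Submodule.add_mem _ (Submodule.add_mem _
      (Submodule.add_mem _ (Submodule.smul_mem _ _ (hm 0)) (Submodule.smul_mem _ _ (hm 1)))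
      (Submodule.smul_mem _ _ (hm 2))) (Submodule.smul_mem _ _ (hm 3)))
      (Submodule.smul_mem _ _ (hm 4))) (Submodule.smul_mem _ _ (hm 5))

lemma aux_gram : ∀ k l : Fin 6,
    (![![-1, 1, 1, 1, 0, 0, 0],
        ![0, -1, 1, 0, 0, 0, 0],
        ![0, 0, -1, 1, 0, 0, 0],
        ![0, 0, 0, -1, 1, 0, 0],
        ![0, 0, 0, 0, -1, 1, 0],
        ![0, 0, 0, 0, 0, -1, 1]] : Fin 6 → (Fin 7 → ℤ)) k ⬝ᵥ
      (!![7, 3, 3, 3, 3, 3, 3;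
         3, 3, 1, 1, 1, 1, 1;
         3, 1, 3, 1, 1, 1, 1;
         3, 1, 1, 3, 1, 1, 1;
         3, 1, 1, 1, 3, 1, 1;
         3, 1, 1, 1, 1, 3, 1;
         3, 1, 1, 1, 1, 1, 3] : Matrix (Fin 7) (Fin 7) ℤ).mulVec
        ((![![-1, 1, 1, 1, 0, 0, 0],
        ![0, -1, 1, 0, 0, 0, 0],
        ![0, 0, -1, 1, 0, 0, 0],
        ![0, 0, 0, -1, 1, 0, 0],
        ![0, 0, 0, 0, -1, 1, 0],
        ![0, 0, 0, 0, 0, -1, 1]] : Fin 6 → (Fin 7 → ℤ)) l)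
      = 2 * (!![2, 0, 0, -1, 0, 0;
         0, 2, -1, 0, 0, 0;
         0, -1, 2, -1, 0, 0;
         -1, 0, -1, 2, -1, 0;
         0, 0, 0, -1, 2, -1;
         0, 0, 0, 0, -1, 2] : Matrix (Fin 6) (Fin 6) ℤ) k l := by
  decide

/-- The orthogonal complement of `h² = 3F₀ − F₁ − ⋯ − F₆` in the lattice `M`
has rank 6: the vectors `β₁ = −F₀+F₁+F₂+F₃`, `βⱼ = Fⱼ − F_{j−1}` (2 ≤ j ≤ 6) form a
ℤ-basis of it, and their Gram matrix is twice the Gram matrix of the root lattice `E₆`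
(for the Dynkin diagram labelling in which the branch node `β₁` is attached to `β₄`);
i.e. `(h²)^⊥ ≅ E₆(2)`. -/
theorem orthogonal_complement_E6_twisted :
    let G : Matrix (Fin 7) (Fin 7) ℤ :=
      !![7, 3, 3, 3, 3, 3, 3;
         3, 3, 1, 1, 1, 1, 1;
         3, 1, 3, 1, 1, 1, 1;
         3, 1, 1, 3, 1, 1, 1;
         3, 1, 1, 1, 3, 1, 1;
         3, 1, 1, 1, 1, 3, 1;
         3, 1, 1, 1, 1, 1, 3]
    let B : (Fin 7 → ℤ) → (Fin 7 → ℤ) → ℤ := fun x y => x ⬝ᵥ G.mulVec y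
    let h2 : Fin 7 → ℤ := ![3, -1, -1, -1, -1, -1, -1]
    let β : Fin 6 → (Fin 7 → ℤ) :=
      ![![-1, 1, 1, 1, 0, 0, 0],
        ![0, -1, 1, 0, 0, 0, 0],
        ![0, 0, -1, 1, 0, 0, 0],
        ![0, 0, 0, -1, 1, 0, 0],
        ![0, 0, 0, 0, -1, 1, 0],
        ![0, 0, 0, 0, 0, -1, 1]]
    -- Gram matrix of the root lattice E₆ (a symmetric Cartan matrix of type E₆)
    let E6 : Matrix (Fin 6) (Fin 6) ℤ :=
      !![2, 0, 0, -1, 0, 0;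
         0, 2, -1, 0, 0, 0;
         0, -1, 2, -1, 0, 0;
         -1, 0, -1, 2, -1, 0;
         0, 0, 0, -1, 2, -1;
         0, 0, 0, 0, -1, 2]
    LinearIndependent ℤ β ∧
    (Submodule.span ℤ (Set.range β) : Set (Fin 7 → ℤ)) = {x | B x h2 = 0} ∧
    ∀ k l : Fin 6, B (β k) (β l) = 2 * E6 k l := by
  exact ⟨aux_li, aux_span, aux_gram⟩
end

section
/- In the rank 7 lattice M with Gram matrix G_{00}=7, G_{ii}=3 (1≤i≤6), G_{0i}=3, G_{ij}=1 (1≤i≠j≤6), the linear map s fixing F_4, F_5, F_6 and sending F_0 ↦ 2F_0−F_1−F_2−F_3, F_1 ↦ F_0−F_2−F_3, F_2 ↦ F_0−F_1−F_3, F_3 ↦ F_0−F_1−F_2 is an isometry of M fixing h² = 3F_0 − F_1 − ... − F_6. -/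
open Matrix

/-- The linear map `s` on the lattice `M` fixing `F₄, F₅, F₆` and sending
`F₀ ↦ 2F₀−F₁−F₂−F₃`, `F₁ ↦ F₀−F₂−F₃`, `F₂ ↦ F₀−F₁−F₃`, `F₃ ↦ F₀−F₁−F₂` (given by the
matrix `S` below, whose columns are the images of the basis vectors) is an isometry of
`M` fixing `h² = 3F₀ − F₁ − ⋯ − F₆`. -/
theorem s_beta1_isometry :
    let G : Matrix (Fin 7) (Fin 7) ℤ :=
      !![7, 3, 3, 3, 3, 3, 3;
         3, 3, 1, 1, 1, 1, 1;
         3, 1, 3, 1, 1, 1, 1;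
         3, 1, 1, 3, 1, 1, 1;
         3, 1, 1, 1, 3, 1, 1;
         3, 1, 1, 1, 1, 3, 1;
         3, 1, 1, 1, 1, 1, 3]
    let S : Matrix (Fin 7) (Fin 7) ℤ :=
      !![2, 1, 1, 1, 0, 0, 0;
         -1, 0, -1, -1, 0, 0, 0;
         -1, -1, 0, -1, 0, 0, 0;
         -1, -1, -1, 0, 0, 0, 0;
         0, 0, 0, 0, 1, 0, 0;
         0, 0, 0, 0, 0, 1, 0;
         0, 0, 0, 0, 0, 0, 1]
    let h2 : Fin 7 → ℤ := ![3, -1, -1, -1, -1, -1, -1]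
    -- `s` is a ℤ-linear automorphism of `M` …
    IsUnit S.det ∧
    -- … preserving the bilinear form …
    (∀ x y : Fin 7 → ℤ, (S.mulVec x) ⬝ᵥ G.mulVec (S.mulVec y) = x ⬝ᵥ G.mulVec y) ∧
    -- … and fixing `h²`
    S.mulVec h2 = h2 := by
  intro G S h2
  have key : Sᵀ * G * S = G := by
    decide
  refine ⟨?_, ?_, ?_⟩
  · have hinv : S * S = 1 := by decide
    exact Matrix.isUnit_det_of_right_inverse hinv
  · intro x y
    calc (S.mulVec x) ⬝ᵥ G.mulVec (S.mulVec y)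
        = x ⬝ᵥ (Sᵀ * G * S).mulVec y := by
          rw [Matrix.dotProduct_mulVec, ← Matrix.vecMul_transpose,
            Matrix.vecMul_vecMul, ← Matrix.dotProduct_mulVec, Matrix.mulVec_mulVec]
      _ = x ⬝ᵥ G.mulVec y := by rw [key]
  · decide
end

section
/- Let v be a primitive vector in an even lattice T with v² > 0 such that the reflection r_v(x) = x − 2((x·v)/v²)v preserves T and the discriminant form of T takes only integer values, with discriminant group A_T ≅ (Z/2Z)^6. Then either v² = 2 and div(v) = 1, or v² = 4 and div(v) = 2. -/
open Matrix

/-- Let `T` be an even nondegenerate lattice (here given by a Gram matrix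
`Gm` on `ℤ^m`) whose discriminant group `A_T = T*/T` (the cokernel of `Gm : ℤ^m → ℤ^m`)
is isomorphic to `(ℤ/2ℤ)⁶` and whose discriminant quadratic form takes only integer
values (i.e. `B(y,y) ∈ ℤ` for all `y` in the dual lattice `Gm⁻¹·ℤ^m`).  Let `v ∈ T` be a
primitive vector with `v² > 0` whose divisibility is `d` (the positive generator of the
ideal `{x·v : x ∈ T}`), and suppose the reflection `r_v` preserves `T`
(equivalently `v² ∣ 2·(x·v)` for all `x ∈ T`).  Then either `v² = 2` and `div(v) = 1`,
or `v² = 4` and `div(v) = 2`. -/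
theorem reflective_vector_types (m : ℕ) (Gm : Matrix (Fin m) (Fin m) ℤ)
    (hsymm : Gm.IsSymm) (hdet : Gm.det ≠ 0)
    (heven : ∀ x : Fin m → ℤ, 2 ∣ x ⬝ᵥ Gm.mulVec x)
    (hAT : Nonempty (((Fin m → ℤ) ⧸ LinearMap.range Gm.mulVecLin) ≃+ (Fin 6 → ZMod 2)))
    (hqint : ∀ x : Fin m → ℤ, ∃ k : ℤ,
      ((Gm.map (Int.cast : ℤ → ℚ))⁻¹.mulVec (fun i => (x i : ℚ))) ⬝ᵥ
        (fun i => (x i : ℚ)) = (k : ℚ))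
    (v : Fin m → ℤ)
    (hprim : ∀ (c : ℤ) (w : Fin m → ℤ), v = c • w → IsUnit c)
    (hpos : 0 < v ⬝ᵥ Gm.mulVec v)
    (d : ℤ) (hd : 0 < d)
    (hdvd : ∀ x : Fin m → ℤ, d ∣ x ⬝ᵥ Gm.mulVec v)
    (hgen : ∃ x : Fin m → ℤ, x ⬝ᵥ Gm.mulVec v = d)
    (hrefl : (v ⬝ᵥ Gm.mulVec v) ∣ 2 * d) :
    (v ⬝ᵥ Gm.mulVec v = 2 ∧ d = 1) ∨ (v ⬝ᵥ Gm.mulVec v = 4 ∧ d = 2) := by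
  set n := v ⬝ᵥ Gm.mulVec v with hn
  set Q : Matrix (Fin m) (Fin m) ℚ := Gm.map (Int.cast : ℤ → ℚ) with hQ
  have hQdet : IsUnit Q.det := by
    have hmap : Q.det = (Gm.det : ℚ) := by
      rw [hQ]; simpa using ((Int.castRingHom ℚ).map_det Gm).symm
    rw [isUnit_iff_ne_zero, hmap]
    exact_mod_cast hdet
  -- casting mulVec
  have hcast : ∀ a : Fin m → ℤ,
      (fun i => ((Gm.mulVec a i : ℤ) : ℚ)) = Q.mulVec (fun i => (a i : ℚ)) := by
    intro a; funext i
    simpa [hQ, Function.comp_def] using RingHom.map_mulVec (Int.castRingHom ℚ) Gm a i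
  -- injectivity of Gm.mulVec
  have hinj : ∀ a b : Fin m → ℤ, Gm.mulVec a = Gm.mulVec b → a = b := by
    intro a b hab
    have h1 : Q.mulVec (fun i => (a i : ℚ)) = Q.mulVec (fun i => (b i : ℚ)) := by
      rw [← hcast a, ← hcast b, hab]
    have := Matrix.mulVec_injective_iff_isUnit.mpr ((Matrix.isUnit_iff_isUnit_det Q).mpr hQdet) h1
    funext i
    have := congrFun this i
    exact_mod_cast this
  -- 2-torsion of the discriminant group
  have h2tors : ∀ x : Fin m → ℤ, ∃ w : Fin m → ℤ, Gm.mulVec w = (2 : ℤ) • x := by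
    obtain ⟨e⟩ := hAT
    intro x
    have hx : (2 : ℤ) • x ∈ LinearMap.range Gm.mulVecLin := by
      rw [← Submodule.Quotient.mk_eq_zero]
      have hmk : (Submodule.Quotient.mk ((2 : ℤ) • x) :
          (Fin m → ℤ) ⧸ LinearMap.range Gm.mulVecLin)
          = (2 : ℤ) • Submodule.Quotient.mk x := by
        rw [Submodule.Quotient.mk_smul]
      rw [hmk]
      apply e.injective
      rw [map_zsmul, map_zero]
      funext i
      rw [Pi.smul_apply, Pi.zero_apply, two_zsmul]
      exact CharTwo.add_self_eq_zero _
    obtain ⟨w, hw⟩ := hx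
    exact ⟨w, by simpa [Matrix.mulVecLin_apply] using hw⟩
  -- divisibility of coordinates of Gm v
  have hdvdi : ∀ i, d ∣ Gm.mulVec v i := by
    intro i
    have := hdvd (Pi.single i 1)
    simpa [single_dotProduct] using this
  set x₀ : Fin m → ℤ := fun i => Gm.mulVec v i / d with hx₀
  have hdx : ∀ i, d * x₀ i = Gm.mulVec v i := fun i => Int.mul_ediv_cancel' (hdvdi i)
  -- d ∣ 2
  have hd2 : d = 1 ∨ d = 2 := by
    obtain ⟨w, hw⟩ := h2tors x₀
    have hkey : d • w = (2 : ℤ) • v := by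
      apply hinj
      rw [Matrix.mulVec_smul, Matrix.mulVec_smul, hw]
      funext i
      simp only [Pi.smul_apply, smul_eq_mul]
      rw [← hdx i]; ring
    have hkey' : ∀ i, d * w i = 2 * v i := fun i => congrFun hkey i
    rcases Int.even_or_odd d with ⟨c, hc⟩ | hodd
    · -- d = 2c
      have hcpos : 0 < c := by omega
      have hvc : v = c • w := by
        funext i
        have := hkey' i
        have : 2 * (c * w i) = 2 * v i := by rw [← this, hc]; ring
        simpa using (mul_left_cancel₀ (by norm_num : (2:ℤ) ≠ 0) this).symm
      have := hprim c w hvc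
      rw [Int.isUnit_iff] at this
      right; omega
    · -- d odd : d ∣ v i for all i
      have hdvdv : ∀ i, d ∣ v i := by
        intro i
        have hdvd2 : d ∣ 2 * v i := ⟨w i, (hkey' i).symm⟩
        have hcop : IsCoprime d 2 := by
          rw [Int.isCoprime_iff_gcd_eq_one]
          have hna : Odd d.natAbs := Int.natAbs_odd.mpr hodd
          simpa [Int.gcd] using Nat.coprime_two_right.mpr hna
        exact (hcop.dvd_of_dvd_mul_left hdvd2)
      have hvd : v = d • fun i => v i / d := by
        funext i
        simp [Int.mul_ediv_cancel' (hdvdv i)]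
      have := hprim d _ hvd
      rw [Int.isUnit_iff] at this
      left; omega
  -- d ∣ n
  have hdn : d ∣ n := hdvd v
  -- d^2 ∣ n  (from integrality of the discriminant form at v/d)
  have hd2n : d ^ 2 ∣ n := by
    obtain ⟨k, hk⟩ := hqint x₀
    have hcx : (fun i => ((x₀ i : ℤ) : ℚ)) = (d : ℚ)⁻¹ • Q.mulVec (fun i => (v i : ℚ)) := by
      funext i
      rw [← hcast v]
      have := hdx i
      have hdq : ((d : ℚ)) * (x₀ i : ℚ) = ((Gm.mulVec v i : ℤ) : ℚ) := by exact_mod_cast congrArg (Int.cast : ℤ → ℚ) this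
      have hdne : (d : ℚ) ≠ 0 := by exact_mod_cast hd.ne'
      field_simp at hdq ⊢
      rw [Pi.smul_apply, smul_eq_mul, ← hdq]; field_simp
    have hinvQ : Q⁻¹.mulVec (fun i => ((x₀ i : ℤ) : ℚ))
        = (d : ℚ)⁻¹ • (fun i => ((v i : ℤ) : ℚ)) := by
      rw [hcx, Matrix.mulVec_smul, Matrix.mulVec_mulVec, Matrix.nonsing_inv_mul Q hQdet,
        Matrix.one_mulVec]
    have hnq : (fun i => ((v i : ℤ) : ℚ)) ⬝ᵥ (fun i => ((x₀ i : ℤ) : ℚ))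
        = (d : ℚ)⁻¹ * (n : ℚ) := by
      rw [hcx, dotProduct_smul, ← hcast v]
      congr 1
      have := RingHom.map_dotProduct (Int.castRingHom ℚ) v (Gm.mulVec v)
      simpa [Function.comp_def, hn] using this.symm
    rw [hinvQ, smul_dotProduct, hnq] at hk
    have hdne : (d : ℚ) ≠ 0 := by exact_mod_cast hd.ne'
    have : (n : ℚ) = ((d ^ 2 * k : ℤ) : ℚ) := by
      push_cast
      simp only [smul_eq_mul] at hk; field_simp at hk
      linarith [hk]
    exact ⟨k, by exact_mod_cast this⟩
  -- finish
  have h2n : 2 ∣ n := heven v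
  have hnle : n ≤ 2 * d := Int.le_of_dvd (by omega) hrefl
  rcases hd2 with rfl | rfl
  · left; constructor
    · omega
    · rfl
  · right
    have h4n : 4 ∣ n := by simpa using hd2n
    constructor
    · omega
    · rfl
end
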